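/- Let (b_n) be a summable sequence of positive reals and (a_n) positive reals with Σ a_n b_n = +∞. For h > 0 define N(h) = max{N ∈ ℕ : hπ Σ_{n=1}^{N} a_n b_n ≤ 2 Σ_{n=N+1}^∞ b_n} and ϖ*(h) = 4 Σ_{n=N(h)+1}^∞ b_n. Then N(h) → +∞ and ϖ*(h) → 0 as h → 0⁺, and the function f(x) = Σ_{n=1}^∞ b_n sin(π a_n x) satisfies |f(x+h) − f(x)| ≤ ϖ*(h) for all x ∈ ℝ and all sufficiently small h > 0. -/

import Mathlib

/-- The Weierstrass-type series f(x) = Σ bₙ sin(π aₙ x). -/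
noncomputable def weierF (a b : ℕ → ℝ) (x : ℝ) : ℝ :=
  ∑' n, b n * Real.sin (Real.pi * a n * x)

/-- N(h): the largest N with hπ Σ_{n<N} aₙbₙ ≤ 2 Σ_{n≥N} bₙ. -/
noncomputable def cutN (a b : ℕ → ℝ) (h : ℝ) : ℕ :=
  sSup {N : ℕ | h * Real.pi * ∑ n ∈ Finset.range N, a n * b n ≤ 2 * ∑' n, b (n + N)}

/-- ϖ*(h) = 4 Σ_{n ≥ N(h)} bₙ. -/
noncomputable def modStar (a b : ℕ → ℝ) (h : ℝ) : ℝ := 4 * ∑' n, b (n + cutN a b h)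

lemma abs_sin_sub_sin_le' (u v : ℝ) : |Real.sin u - Real.sin v| ≤ |u - v| := by
  rw [Real.sin_sub_sin, abs_mul, abs_mul]
  have h1 : |Real.sin ((u - v) / 2)| ≤ |(u - v) / 2| := Real.abs_sin_le_abs
  have h2 : |Real.cos ((u + v) / 2)| ≤ 1 := Real.abs_cos_le_one _
  have h3 : |(u - v) / 2| = |u - v| / 2 := by rw [abs_div]; norm_num
  have h4 : |(2:ℝ)| = 2 := by norm_num
  rw [h4]
  nlinarith [abs_nonneg (Real.sin ((u - v) / 2)), abs_nonneg (u - v),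
    abs_nonneg (Real.cos ((u + v) / 2))]

set_option maxHeartbeats 1000000 in
/-- N(h) → ∞ and ϖ*(h) → 0 as h → 0⁺, and ϖ* is a modulus of continuity
for f, i.e. |f(x+h) − f(x)| ≤ ϖ*(h) for all x and all sufficiently small h > 0. -/
theorem stmt_15 (a b : ℕ → ℝ) (ha : ∀ n, 0 < a n) (hb : ∀ n, 0 < b n)
    (hsum : Summable b)
    (hdiv : Filter.Tendsto (fun N => ∑ n ∈ Finset.range N, a n * b n)
      Filter.atTop Filter.atTop) :
    Filter.Tendsto (fun h => cutN a b h) (nhdsWithin 0 (Set.Ioi 0)) Filter.atTop ∧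
    Filter.Tendsto (modStar a b) (nhdsWithin 0 (Set.Ioi 0)) (nhds 0) ∧
    ∀ᶠ h in nhdsWithin 0 (Set.Ioi 0), ∀ x : ℝ,
      |weierF a b (x + h) - weierF a b x| ≤ modStar a b h := by
  have hpi : (0:ℝ) < Real.pi := Real.pi_pos
  set C : ℕ → ℝ := fun N => ∑ n ∈ Finset.range N, a n * b n with hCdef
  set T : ℕ → ℝ := fun N => ∑' n, b (n + N) with hTdef
  have hTsum : ∀ N, Summable fun n => b (n + N) := fun N => (summable_nat_add_iff N).2 hsum
  have hTpos : ∀ N, 0 < T N := fun N =>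
    Summable.tsum_pos (hTsum N) (fun n => (hb _).le) 0 (hb _)
  have hTle : ∀ N, T N ≤ ∑' n, b n := by
    intro N
    have h1 := Summable.sum_add_tsum_nat_add (f := b) N hsum
    have h2 : (0:ℝ) ≤ ∑ i ∈ Finset.range N, b i :=
      Finset.sum_nonneg fun i _ => (hb i).le
    simp only [hTdef]
    linarith
  have hbdd : ∀ h : ℝ, 0 < h →
      BddAbove {N : ℕ | h * Real.pi * C N ≤ 2 * T N} := by
    intro h hh
    obtain ⟨K, hK⟩ := Filter.eventually_atTop.1
      (hdiv.eventually_ge_atTop ((2 * ∑' n, b n) / (h * Real.pi) + 1))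
    refine ⟨K, fun N hN => ?_⟩
    by_contra hlt
    push_neg at hlt
    have hCN := hK N hlt.le
    have hhpi : 0 < h * Real.pi := mul_pos hh hpi
    have : h * Real.pi * C N ≥ h * Real.pi * ((2 * ∑' n, b n) / (h * Real.pi) + 1) :=
      mul_le_mul_of_nonneg_left hCN hhpi.le
    rw [mul_add, mul_div_cancel₀ _ hhpi.ne'] at this
    have hT2 := hTle N
    have hmem : h * Real.pi * C N ≤ 2 * T N := hN
    nlinarith
  have hne : ∀ h : ℝ, (0:ℝ) < h →
      (0:ℕ) ∈ {N : ℕ | h * Real.pi * C N ≤ 2 * T N} := by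
    intro h hh
    simp only [Set.mem_setOf_eq, hCdef, Finset.range_zero, Finset.sum_empty, mul_zero]
    linarith [hTpos 0]
  have hcut_mem : ∀ h : ℝ, 0 < h →
      cutN a b h ∈ {N : ℕ | h * Real.pi * C N ≤ 2 * T N} := by
    intro h hh
    exact Nat.sSup_mem ⟨0, hne h hh⟩ (hbdd h hh)
  -- part 1
  have part1 : Filter.Tendsto (fun h => cutN a b h) (nhdsWithin 0 (Set.Ioi 0))
      Filter.atTop := by
    rw [Filter.tendsto_atTop]
    intro M
    set δ : ℝ := 2 * T M / (Real.pi * C M + 1) with hδ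
    have hCM : 0 ≤ C M := Finset.sum_nonneg fun i _ => (mul_pos (ha i) (hb i)).le
    have hden : 0 < Real.pi * C M + 1 := by positivity
    have hδpos : 0 < δ := div_pos (by linarith [hTpos M]) hden
    filter_upwards [Ioo_mem_nhdsGT_of_mem (Set.mem_Ico.2 ⟨le_refl (0:ℝ), hδpos⟩)] with h hh
    have hh0 : 0 < h := hh.1
    have hhδ : h < δ := hh.2
    have hmem : M ∈ {N : ℕ | h * Real.pi * C N ≤ 2 * T N} := by
      simp only [Set.mem_setOf_eq]
      have h1 : h * Real.pi * C M ≤ δ * (Real.pi * C M) := by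
        rw [mul_assoc]
        exact mul_le_mul_of_nonneg_right hhδ.le (by positivity)
      have h2 : δ * (Real.pi * C M) ≤ 2 * T M := by
        rw [hδ, div_mul_eq_mul_div, div_le_iff₀ hden]
        nlinarith [hTpos M]
      linarith
    exact le_csSup (hbdd h hh0) hmem
  refine ⟨part1, ?_, ?_⟩
  · -- part 2
    have htail : Filter.Tendsto (fun N : ℕ => T N) Filter.atTop (nhds 0) :=
      tendsto_sum_nat_add b
    have := (htail.comp part1).const_mul (4:ℝ)
    rw [show modStar a b = fun h => 4 * ∑' n, b (n + cutN a b h) from rfl]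
    simpa [modStar, hTdef, mul_zero] using this
  · -- part 3
    filter_upwards [self_mem_nhdsWithin] with h hh x
    have hh0 : 0 < h := hh
    set N := cutN a b h with hN
    have hmem : h * Real.pi * C N ≤ 2 * T N := hcut_mem h hh0
    set c : ℕ → ℝ := fun n =>
      b n * (Real.sin (Real.pi * a n * (x + h)) - Real.sin (Real.pi * a n * x)) with hc
    have hcbound : ∀ n, |c n| ≤ 2 * b n := by
      intro n
      rw [hc, abs_mul, abs_of_pos (hb n)]
      have : |Real.sin (Real.pi * a n * (x + h)) - Real.sin (Real.pi * a n * x)| ≤ 2 := by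
        have h1 := Real.neg_one_le_sin (Real.pi * a n * (x + h))
        have h2 := Real.sin_le_one (Real.pi * a n * (x + h))
        have h3 := Real.neg_one_le_sin (Real.pi * a n * x)
        have h4 := Real.sin_le_one (Real.pi * a n * x)
        rw [abs_le]; constructor <;> linarith
      nlinarith [hb n]
    have hcbound' : ∀ n, |c n| ≤ h * Real.pi * (a n * b n) := by
      intro n
      rw [hc, abs_mul, abs_of_pos (hb n)]
      have hlip := abs_sin_sub_sin_le' (Real.pi * a n * (x + h)) (Real.pi * a n * x)
      have heq : Real.pi * a n * (x + h) - Real.pi * a n * x = Real.pi * a n * h := by ring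
      rw [heq, abs_of_pos (mul_pos (mul_pos hpi (ha n)) hh0)] at hlip
      calc b n * |Real.sin (Real.pi * a n * (x + h)) - Real.sin (Real.pi * a n * x)|
          ≤ b n * (Real.pi * a n * h) := mul_le_mul_of_nonneg_left hlip (hb n).le
        _ = h * Real.pi * (a n * b n) := by ring
    have hcsum : Summable c := by
      apply Summable.of_norm_bounded (g := fun n => 2 * b n) (hsum.mul_left 2)
      intro n
      simpa [Real.norm_eq_abs] using hcbound n
    have hg1 : Summable fun n => b n * Real.sin (Real.pi * a n * (x + h)) := by
      apply Summable.of_norm_bounded (g := b) hsum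
      intro n
      rw [Real.norm_eq_abs, abs_mul, abs_of_pos (hb n)]
      have := Real.abs_sin_le_one (Real.pi * a n * (x + h))
      nlinarith [hb n]
    have hg2 : Summable fun n => b n * Real.sin (Real.pi * a n * x) := by
      apply Summable.of_norm_bounded (g := b) hsum
      intro n
      rw [Real.norm_eq_abs, abs_mul, abs_of_pos (hb n)]
      have := Real.abs_sin_le_one (Real.pi * a n * x)
      nlinarith [hb n]
    have hdiff : weierF a b (x + h) - weierF a b x = ∑' n, c n := by
      rw [weierF, weierF, ← Summable.tsum_sub hg1 hg2]
      congr 1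
      funext n
      rw [hc]; ring
    rw [hdiff]
    have hsplit := Summable.sum_add_tsum_nat_add (f := c) N hcsum
    have hcsumN : Summable fun n => c (n + N) := (summable_nat_add_iff N).2 hcsum
    have htail_bound : |∑' n, c (n + N)| ≤ 2 * T N := by
      have hhs : HasSum (fun n => 2 * b (n + N)) (2 * T N) :=
        (hTsum N).hasSum.mul_left 2
      have := tsum_of_norm_bounded (f := fun n => c (n + N)) hhs (fun n => by
        simpa [Real.norm_eq_abs] using hcbound (n + N))
      simpa [Real.norm_eq_abs] using this
    have hhead_bound : |∑ n ∈ Finset.range N, c n| ≤ h * Real.pi * C N := by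
      calc |∑ n ∈ Finset.range N, c n| ≤ ∑ n ∈ Finset.range N, |c n| :=
            Finset.abs_sum_le_sum_abs _ _
        _ ≤ ∑ n ∈ Finset.range N, h * Real.pi * (a n * b n) :=
            Finset.sum_le_sum fun n _ => hcbound' n
        _ = h * Real.pi * C N := by rw [hCdef, Finset.mul_sum]
    calc |∑' n, c n| = |∑ n ∈ Finset.range N, c n + ∑' n, c (n + N)| := by rw [hsplit]
      _ ≤ |∑ n ∈ Finset.range N, c n| + |∑' n, c (n + N)| := abs_add_le _ _
      _ ≤ h * Real.pi * C N + 2 * T N := add_le_add hhead_bound htail_bound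
      _ ≤ 2 * T N + 2 * T N := by linarith
      _ = modStar a b h := by rw [modStar, hTdef]; ring
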